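/- Let A₁ and A₂ be unital associative ℂ-algebras, let U₁ be an irreducible A₁-module and U₂ an irreducible A₂-module. If either every A₁-module endomorphism of U₁ is a scalar multiple of the identity, or A₁ has countable dimension over ℂ, then U₁ ⊗ U₂ is an irreducible A₁ ⊗ A₂-module. -/

import Mathlib

open scoped TensorProduct

noncomputable section
namespace Twisted

/-- `U` (with representation `ρ`) is an irreducible `A`-module. -/
def AIrred (A : Type) [Ring A] [Algebra ℂ A] (U : Type) [AddCommGroup U] [Module ℂ U]
    (ρ : A →ₐ[ℂ] Module.End ℂ U) : Prop :=
  Nontrivial U ∧ ∀ S : Submodule ℂ U, (∀ a : A, ∀ x ∈ S, ρ a x ∈ S) → S = ⊥ ∨ S = ⊤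

/-- `A` has countable dimension over `ℂ` (a countable basis). -/
def CountableDim (A : Type) [Ring A] [Algebra ℂ A] : Prop :=
  ∃ ι : Type, Countable ι ∧ Nonempty (Module.Basis ι ℂ A)

section Aux
variable {A : Type} [Ring A] [Algebra ℂ A] {U : Type} [AddCommGroup U] [Module ℂ U]
  (ρ : A →ₐ[ℂ] Module.End ℂ U)

lemma invariant_eq_top (h : AIrred A U ρ) (S : Submodule ℂ U)
    (hinv : ∀ a : A, ∀ x ∈ S, ρ a x ∈ S) {x : U} (hx : x ∈ S) (hx0 : x ≠ 0) : S = ⊤ := by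
  rcases h.2 S hinv with hb | ht
  · subst hb; exact absurd (Submodule.mem_bot ℂ |>.mp hx) hx0
  · exact ht

lemma schur_bijective (h : AIrred A U ρ) (f : Module.End ℂ U)
    (hf : ∀ a, f * ρ a = ρ a * f) (hne : f ≠ 0) : Function.Bijective f := by
  have hcomm : ∀ (a : A) (x : U), f (ρ a x) = ρ a (f x) := by
    intro a x
    rw [← Module.End.mul_apply, hf, Module.End.mul_apply]
  have hker : LinearMap.ker f = ⊥ := by
    have hinv : ∀ a : A, ∀ x ∈ LinearMap.ker f, ρ a x ∈ LinearMap.ker f := by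
      intro a x hx
      rw [LinearMap.mem_ker] at hx ⊢
      rw [hcomm, hx, map_zero]
    rcases h.2 _ hinv with hb | ht
    · exact hb
    · exact absurd (LinearMap.ker_eq_top.mp ht) hne
  have hrange : LinearMap.range f = ⊤ := by
    have hinv : ∀ a : A, ∀ x ∈ LinearMap.range f, ρ a x ∈ LinearMap.range f := by
      rintro a x ⟨y, rfl⟩
      exact ⟨ρ a y, hcomm a y⟩
    rcases h.2 _ hinv with hb | ht
    · exact absurd (LinearMap.range_eq_bot.mp hb) hne
    · exact ht
  exact ⟨LinearMap.ker_eq_bot.mp hker, LinearMap.range_eq_top.mp hrange⟩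

lemma dixmier (h : AIrred A U ρ) (hc : CountableDim A) :
    ∀ f : Module.End ℂ U, (∀ a, f * ρ a = ρ a * f) → ∃ c : ℂ, f = c • 1 := by
  obtain ⟨ι, hι, ⟨b⟩⟩ := hc
  haveI := h.1
  haveI := hι
  obtain ⟨v, hv⟩ := exists_ne (0 : U)
  -- U has countable dimension
  have hrankU : Module.rank ℂ U ≤ Cardinal.aleph0 := by
    set L : A →ₗ[ℂ] U :=
      { toFun := fun a => ρ a v
        map_add' := fun a b => by simp only [map_add, LinearMap.add_apply]
        map_smul' := fun c a => by simp only [map_smul, LinearMap.smul_apply, RingHom.id_apply] }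
    have hLsurj : Function.Surjective L := by
      have hinv : ∀ a : A, ∀ x ∈ LinearMap.range L, ρ a x ∈ LinearMap.range L := by
        rintro a x ⟨c, rfl⟩
        exact ⟨a * c, by simp only [L, LinearMap.coe_mk, AddHom.coe_mk, map_mul, Module.End.mul_apply]⟩
      have hmem : v ∈ LinearMap.range L := ⟨1, by simp only [L, LinearMap.coe_mk, AddHom.coe_mk, map_one, Module.End.one_apply]⟩
      have := invariant_eq_top ρ h _ hinv hmem hv
      exact LinearMap.range_eq_top.mp this
    calc Module.rank ℂ U ≤ Module.rank ℂ A := LinearMap.rank_le_of_surjective L hLsurj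
    _ = Cardinal.mk ι := b.mk_eq_rank''.symm
    _ ≤ Cardinal.aleph0 := Cardinal.mk_le_aleph0
  intro f hf
  by_contra hno
  push_neg at hno
  -- every f - r • 1 is a unit
  have hfr : ∀ r : ℂ, IsUnit (f - r • 1) := by
    intro r
    have hcomm : ∀ a, (f - r • 1) * ρ a = ρ a * (f - r • 1) := by
      intro a
      rw [sub_mul, mul_sub, hf a, smul_mul_assoc, mul_smul_comm, one_mul, mul_one]
    exact (Module.End.isUnit_iff _).mpr
      (schur_bijective ρ h _ hcomm (sub_ne_zero.mpr (hno r)))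
  -- aeval f p is a unit for nonzero p
  have keyP : ∀ (n : ℕ) (p : Polynomial ℂ), p.natDegree = n → p ≠ 0 →
      IsUnit (Polynomial.aeval f p) := by
    intro n
    induction n using Nat.strong_induction_on with
    | _ n IH =>
      intro p hdeg hp0
      rcases Nat.eq_zero_or_pos n with h0 | hpos
      · subst h0
        obtain ⟨c, rfl⟩ := Polynomial.natDegree_eq_zero.mp hdeg
        have hc : c ≠ 0 := fun hcc => hp0 (by rw [hcc, map_zero])
        rw [Polynomial.aeval_C]
        exact (isUnit_iff_ne_zero.mpr hc).map (algebraMap ℂ (Module.End ℂ U))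
      · have hdegpos : 0 < p.degree := Polynomial.natDegree_pos_iff_degree_pos.mp (hdeg ▸ hpos)
        obtain ⟨r, hr⟩ := Complex.exists_root hdegpos
        obtain ⟨q, rfl⟩ := Polynomial.dvd_iff_isRoot.mpr hr
        have hq0 : q ≠ 0 := fun hq => hp0 (by rw [hq, mul_zero])
        have hXr : (Polynomial.X - Polynomial.C r) ≠ 0 := Polynomial.X_sub_C_ne_zero r
        have hdq : q.natDegree < n := by
          have h2 := Polynomial.natDegree_mul hXr hq0
          rw [Polynomial.natDegree_X_sub_C] at h2
          omega
        have h1 : Polynomial.aeval f (Polynomial.X - Polynomial.C r) = f - r • 1 := by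
          rw [map_sub, Polynomial.aeval_X, Polynomial.aeval_C, Algebra.algebraMap_eq_smul_one]
        rw [map_mul, h1]
        exact (hfr r).mul (IH _ hdq q rfl hq0)
  set inv : ℂ → Module.End ℂ U := fun c => (((hfr c).unit⁻¹ : (Module.End ℂ U)ˣ) : Module.End ℂ U)
    with hinvdef
  have hind : LinearIndependent ℂ (fun c => inv c v) := by
    rw [linearIndependent_iff']
    intro s g hsum c hcs
    by_contra hgc
    set P : ℂ → Polynomial ℂ := fun c' => ∏ c'' ∈ s.erase c', (Polynomial.X - Polynomial.C c'')
      with hP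
    set Q : Polynomial ℂ := ∏ c'' ∈ s, (Polynomial.X - Polynomial.C c'') with hQdef
    have haevalXC : ∀ r : ℂ, Polynomial.aeval f (Polynomial.X - Polynomial.C r) = f - r • 1 := by
      intro r
      rw [map_sub, Polynomial.aeval_X, Polynomial.aeval_C, Algebra.algebraMap_eq_smul_one]
    have hQ : ∀ c' ∈ s, (Polynomial.aeval f Q) (inv c' v) = (Polynomial.aeval f (P c')) v := by
      intro c' hc'
      rw [hQdef, ← Finset.prod_erase_mul s _ hc', map_mul, Module.End.mul_apply]
      congr 1
      rw [haevalXC]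
      calc (f - c' • 1) (inv c' v)
          = (((hfr c').unit : Module.End ℂ U) * inv c') v := by
            rw [Module.End.mul_apply, hinvdef, IsUnit.unit_spec]
        _ = v := by
            rw [hinvdef, ← Units.val_mul, mul_inv_cancel, Units.val_one, Module.End.one_apply]
    set p : Polynomial ℂ := ∑ c' ∈ s, Polynomial.C (g c') * P c' with hp
    have hap : (Polynomial.aeval f p) v = 0 := by
      have h2 : (Polynomial.aeval f Q) (∑ c' ∈ s, g c' • inv c' v) = 0 := by
        rw [hsum, map_zero]
      rw [map_sum] at h2
      simp only [map_smul] at h2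
      calc (Polynomial.aeval f p) v
          = ∑ c' ∈ s, g c' • (Polynomial.aeval f (P c')) v := by
            rw [hp, map_sum, LinearMap.sum_apply]
            refine Finset.sum_congr rfl fun c' _ => ?_
            rw [map_mul, Polynomial.aeval_C, Module.End.mul_apply, Algebra.algebraMap_eq_smul_one,
              LinearMap.smul_apply, Module.End.one_apply]
        _ = ∑ c' ∈ s, g c' • (Polynomial.aeval f Q) (inv c' v) := by
            refine Finset.sum_congr rfl fun c' hc' => ?_
            rw [hQ c' hc']
        _ = 0 := by
            simpa using h2
    have hp0 : p ≠ 0 := by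
      intro hzero
      have heval : Polynomial.eval c p = g c * ∏ c'' ∈ s.erase c, (c - c'') := by
        rw [hp, Polynomial.eval_finset_sum]
        rw [Finset.sum_eq_single c]
        · simp [hP, Polynomial.eval_prod]
        · intro c' hc' hne
          have hcmem : c ∈ s.erase c' := Finset.mem_erase.mpr ⟨Ne.symm hne, hcs⟩
          rw [Polynomial.eval_mul, hP]
          rw [Polynomial.eval_prod]
          rw [Finset.prod_eq_zero hcmem (by simp), mul_zero]
        · intro hcc; exact absurd hcs hcc
      rw [hzero] at heval
      simp only [Polynomial.eval_zero] at heval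
      have : g c * ∏ c'' ∈ s.erase c, (c - c'') ≠ 0 := by
        apply mul_ne_zero hgc
        apply Finset.prod_ne_zero_iff.mpr
        intro c'' hc''
        have := Finset.ne_of_mem_erase hc''
        exact sub_ne_zero.mpr (Ne.symm this)
      exact this heval.symm
    have hunit := keyP p.natDegree p rfl hp0
    have hinj : Function.Injective (Polynomial.aeval f p) :=
      ((Module.End.isUnit_iff _).mp hunit).injective
    exact hv (hinj (by rw [hap, map_zero]))
  have hcard := hind.cardinal_le_rank
  rw [Cardinal.mk_complex] at hcard
  exact absurd (hcard.trans hrankU) (not_le.mpr Cardinal.aleph0_lt_continuum)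


lemma density (h : AIrred A U ρ)
    (hs : ∀ f : Module.End ℂ U, (∀ a, f * ρ a = ρ a * f) → ∃ c : ℂ, f = c • 1) :
    ∀ (n : ℕ) (u : Fin n → U), LinearIndependent ℂ u → ∀ x : Fin n → U,
      ∃ a : A, ∀ i, ρ a (u i) = x i := by
  intro n
  induction n with
  | zero => exact fun u _ x => ⟨0, fun i => i.elim0⟩
  | succ n IH =>
    intro u hu x
    have stepA : ∀ (u' : Fin (n+1) → U), LinearIndependent ℂ u' →
        ∃ a, (∀ i : Fin n, ρ a (u' i.castSucc) = 0) ∧ ρ a (u' (Fin.last n)) ≠ 0 := by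
      intro u' hu'
      by_contra hA
      push_neg at hA
      set w : Fin n → U := fun i => u' i.castSucc with hwdef
      have hw_li : LinearIndependent ℂ w := hu'.comp _ (Fin.castSucc_injective n)
      have uniq : ∀ (a b : A), (∀ i, ρ a (w i) = ρ b (w i)) →
          ρ a (u' (Fin.last n)) = ρ b (u' (Fin.last n)) := by
        intro a b hab
        have h0 := hA (a - b) (fun i => by
          rw [map_sub, LinearMap.sub_apply, hab, sub_self])
        rw [map_sub, LinearMap.sub_apply, sub_eq_zero] at h0
        exact h0
      have hdelta : ∀ (j : Fin n) (y : U), ∃ a, ∀ i, ρ a (w i) = if i = j then y else 0 :=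
        fun j y => IH w hw_li _
      choose pick hpick using hdelta
      have Fadd : ∀ (j : Fin n) (y z : U), ρ (pick j (y + z)) (u' (Fin.last n)) =
          ρ (pick j y) (u' (Fin.last n)) + ρ (pick j z) (u' (Fin.last n)) := by
        intro j y z
        have h1 : ∀ i, ρ (pick j (y + z)) (w i) = ρ (pick j y + pick j z) (w i) := by
          intro i
          rw [map_add, LinearMap.add_apply, hpick, hpick, hpick]
          by_cases hij : i = j <;> simp [hij]
        rw [uniq _ _ h1, map_add, LinearMap.add_apply]
      have Fsmul : ∀ (j : Fin n) (c : ℂ) (y : U), ρ (pick j (c • y)) (u' (Fin.last n)) =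
          c • ρ (pick j y) (u' (Fin.last n)) := by
        intro j c y
        have h1 : ∀ i, ρ (pick j (c • y)) (w i) = ρ (c • pick j y) (w i) := by
          intro i
          rw [map_smul, LinearMap.smul_apply, hpick, hpick]
          by_cases hij : i = j <;> simp [hij]
        rw [uniq _ _ h1, map_smul, LinearMap.smul_apply]
      set F : Fin n → Module.End ℂ U := fun j =>
        { toFun := fun y => ρ (pick j y) (u' (Fin.last n))
          map_add' := Fadd j
          map_smul' := fun c y => by simp only [Fsmul j c y, RingHom.id_apply] } with hF
      have Fcomm : ∀ (j : Fin n) (b : A), F j * ρ b = ρ b * F j := by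
        intro j b
        ext y
        simp only [Module.End.mul_apply]
        show ρ (pick j (ρ b y)) (u' (Fin.last n)) = ρ b (ρ (pick j y) (u' (Fin.last n)))
        have h1 : ∀ i, ρ (pick j (ρ b y)) (w i) = ρ (b * pick j y) (w i) := by
          intro i
          rw [map_mul, Module.End.mul_apply, hpick, hpick]
          by_cases hij : i = j <;> simp [hij]
        rw [uniq _ _ h1, map_mul, Module.End.mul_apply]
      choose c hc using fun j => hs (F j) (Fcomm j)
      have hprof : ∀ i, ρ (∑ j, pick j (w j)) (w i) = w i := by
        intro i
        rw [map_sum, LinearMap.sum_apply]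
        have : ∀ j, ρ (pick j (w j)) (w i) = if i = j then w j else 0 := fun j => hpick j (w j) i
        rw [Finset.sum_congr rfl (fun j _ => this j), Finset.sum_ite_eq]
        simp
      have hlast : u' (Fin.last n) = ∑ j, c j • w j := by
        have h1 : ∀ i, ρ (1 : A) (w i) = ρ (∑ j, pick j (w j)) (w i) := by
          intro i
          rw [map_one, Module.End.one_apply, hprof]
        have h2 := uniq 1 _ h1
        rw [map_one, Module.End.one_apply] at h2
        rw [h2, map_sum, LinearMap.sum_apply]
        refine Finset.sum_congr rfl fun j _ => ?_
        have h3 : ρ (pick j (w j)) (u' (Fin.last n)) = F j (w j) := rfl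
        rw [h3, hc j, LinearMap.smul_apply, Module.End.one_apply]
      have hg := Fintype.linearIndependent_iff.mp hu'
        (Fin.lastCases (-1) c) ?_ (Fin.last n)
      · rw [Fin.lastCases_last] at hg
        norm_num at hg
      · rw [Fin.sum_univ_castSucc]
        simp only [Fin.lastCases_castSucc, Fin.lastCases_last]
        rw [hlast]
        simp [hwdef]
    have stepA' : ∀ k : Fin (n+1), ∃ a, ρ a (u k) ≠ 0 ∧ ∀ i, i ≠ k → ρ a (u i) = 0 := by
      intro k
      have hperm : LinearIndependent ℂ (u ∘ Equiv.swap k (Fin.last n)) :=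
        hu.comp _ (Equiv.injective _)
      obtain ⟨a, h0, hne⟩ := stepA _ hperm
      refine ⟨a, ?_, ?_⟩
      · simpa [Function.comp, Equiv.swap_apply_right] using hne
      · intro i hik
        have hj : Equiv.swap k (Fin.last n) (Equiv.swap k (Fin.last n) i) = i :=
          Equiv.swap_apply_self _ _ _
        have hjne : Equiv.swap k (Fin.last n) i ≠ Fin.last n := by
          intro h'
          apply hik
          have h'' := congrArg (Equiv.swap k (Fin.last n)) h'
          rwa [Equiv.swap_apply_self, Equiv.swap_apply_right] at h''
        obtain ⟨j', hj'⟩ := Fin.exists_castSucc_eq.mpr hjne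
        have h1 := h0 j'
        rw [Function.comp_apply, hj', hj] at h1
        exact h1
    have stepB : ∀ (k : Fin (n+1)) (y : U), ∃ a, ρ a (u k) = y ∧ ∀ i, i ≠ k → ρ a (u i) = 0 := by
      intro k
      set V : Submodule ℂ U :=
        { carrier := {y | ∃ a, ρ a (u k) = y ∧ ∀ i, i ≠ k → ρ a (u i) = 0}
          add_mem' := by
            rintro y z ⟨a, ha1, ha2⟩ ⟨b, hb1, hb2⟩
            exact ⟨a + b, by rw [map_add, LinearMap.add_apply, ha1, hb1],
              fun i hi => by rw [map_add, LinearMap.add_apply, ha2 i hi, hb2 i hi, add_zero]⟩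
          zero_mem' := ⟨0, by rw [map_zero]; rfl, fun i _ => by rw [map_zero]; rfl⟩
          smul_mem' := by
            rintro d y ⟨a, ha1, ha2⟩
            exact ⟨d • a, by rw [map_smul, LinearMap.smul_apply, ha1],
              fun i hi => by rw [map_smul, LinearMap.smul_apply, ha2 i hi, smul_zero]⟩ } with hV
      have hVinv : ∀ b : A, ∀ y ∈ V, ρ b y ∈ V := by
        rintro b y ⟨a, ha1, ha2⟩
        exact ⟨b * a, by rw [map_mul, Module.End.mul_apply, ha1],
          fun i hi => by rw [map_mul, Module.End.mul_apply, ha2 i hi, map_zero]⟩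
      obtain ⟨a, hne, h0⟩ := stepA' k
      have hmem : ρ a (u k) ∈ V := ⟨a, rfl, h0⟩
      have hVtop : V = ⊤ := invariant_eq_top ρ h V hVinv hmem hne
      intro y
      have hy : y ∈ V := hVtop ▸ Submodule.mem_top
      exact hy
    choose aa haa1 haa2 using fun k => stepB k (x k)
    refine ⟨∑ k, aa k, fun i => ?_⟩
    rw [map_sum, LinearMap.sum_apply]
    rw [Finset.sum_eq_single i]
    · exact haa1 i
    · exact fun k _ hk => haa2 k i (Ne.symm hk)
    · exact fun hi => absurd (Finset.mem_univ i) hi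

end Aux

section Pure
variable {A₁ A₂ : Type} [Ring A₁] [Algebra ℂ A₁] [Ring A₂] [Algebra ℂ A₂]
  {U₁ U₂ : Type} [AddCommGroup U₁] [Module ℂ U₁] [AddCommGroup U₂] [Module ℂ U₂]
  (ρ₁ : A₁ →ₐ[ℂ] Module.End ℂ U₁) (ρ₂ : A₂ →ₐ[ℂ] Module.End ℂ U₂)

lemma exists_pure (h₁ : AIrred A₁ U₁ ρ₁)
    (hs : ∀ f : Module.End ℂ U₁, (∀ a, f * ρ₁ a = ρ₁ a * f) → ∃ c : ℂ, f = c • 1)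
    (ρT : A₁ ⊗[ℂ] A₂ →ₐ[ℂ] Module.End ℂ (U₁ ⊗[ℂ] U₂))
    (hρT : ∀ (a₁ : A₁) (a₂ : A₂),
      ρT (a₁ ⊗ₜ[ℂ] a₂) = TensorProduct.map (ρ₁ a₁) (ρ₂ a₂))
    (S : Submodule ℂ (U₁ ⊗[ℂ] U₂)) (hS : ∀ a, ∀ z ∈ S, ρT a z ∈ S) :
    ∀ (n : ℕ) (u : Fin n → U₁) (v : Fin n → U₂),
      (∑ i, u i ⊗ₜ[ℂ] v i) ∈ S → (∑ i, u i ⊗ₜ[ℂ] v i) ≠ 0 →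
      ∃ (p : U₁) (q : U₂), p ≠ 0 ∧ q ≠ 0 ∧ p ⊗ₜ[ℂ] q ∈ S := by
  intro n
  induction n with
  | zero =>
    intro u v _ hne
    exact absurd (by simp) hne
  | succ n IH =>
    intro u v hmem hne
    by_cases hzero : ∃ k, v k = 0
    · obtain ⟨k, hk⟩ := hzero
      have heq : ∑ i, u i ⊗ₜ[ℂ] v i
          = ∑ i : Fin n, u (k.succAbove i) ⊗ₜ[ℂ] v (k.succAbove i) := by
        rw [Fin.sum_univ_succAbove (fun i => u i ⊗ₜ[ℂ] v i) k, hk,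
          TensorProduct.tmul_zero, zero_add]
      exact IH _ _ (heq ▸ hmem) (heq ▸ hne)
    · push_neg at hzero
      by_cases hli : LinearIndependent ℂ u
      · obtain ⟨a, ha⟩ := density ρ₁ h₁ hs (n+1) u hli (fun i => if i = 0 then u 0 else 0)
        have hact : ρT (a ⊗ₜ[ℂ] 1) (∑ i, u i ⊗ₜ[ℂ] v i) = u 0 ⊗ₜ[ℂ] v 0 := by
          rw [hρT, map_sum]
          rw [Finset.sum_eq_single (0 : Fin (n+1))]
          · rw [TensorProduct.map_tmul, ha 0, if_pos rfl, map_one, Module.End.one_apply]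
          · intro k _ hk
            rw [TensorProduct.map_tmul, ha k, if_neg hk, TensorProduct.zero_tmul]
          · exact fun hh => absurd (Finset.mem_univ _) hh
        exact ⟨u 0, v 0, hli.ne_zero 0, hzero 0, hact ▸ hS _ _ hmem⟩
      · obtain ⟨g, hg0, k, hgk⟩ := Fintype.not_linearIndependent_iff.mp hli
        set c : Fin (n+1) → ℂ := fun i => -(g i / g k) with hc
        have huk : u k = ∑ i : Fin n, c (k.succAbove i) • u (k.succAbove i) := by
          rw [Fin.sum_univ_succAbove (fun i => g i • u i) k] at hg0
          have h2 : g k • u k = ∑ i : Fin n, -(g (k.succAbove i)) • u (k.succAbove i) := by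
            simp only [neg_smul]
            rw [Finset.sum_neg_distrib]
            exact eq_neg_of_add_eq_zero_left hg0
          calc u k = (g k)⁻¹ • (g k • u k) := (inv_smul_smul₀ hgk _).symm
            _ = ∑ i : Fin n, c (k.succAbove i) • u (k.succAbove i) := by
              rw [h2, Finset.smul_sum]
              refine Finset.sum_congr rfl fun i _ => ?_
              rw [smul_smul, hc]
              congr 1
              field_simp
        have heq : ∑ i, u i ⊗ₜ[ℂ] v i = ∑ i : Fin n,
            u (k.succAbove i) ⊗ₜ[ℂ] (v (k.succAbove i) + c (k.succAbove i) • v k) := by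
          rw [Fin.sum_univ_succAbove (fun i => u i ⊗ₜ[ℂ] v i) k]
          have hterm : ∀ i : Fin n,
              u (k.succAbove i) ⊗ₜ[ℂ] (v (k.succAbove i) + c (k.succAbove i) • v k)
              = u (k.succAbove i) ⊗ₜ[ℂ] v (k.succAbove i)
                + (c (k.succAbove i) • u (k.succAbove i)) ⊗ₜ[ℂ] v k := by
            intro i
            rw [TensorProduct.tmul_add, TensorProduct.smul_tmul]
          rw [Finset.sum_congr rfl fun i _ => hterm i, Finset.sum_add_distrib,
            ← TensorProduct.sum_tmul, ← huk, add_comm]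
        exact IH _ _ (heq ▸ hmem) (heq ▸ hne)

end Pure

/-- If `U₁`, `U₂` are irreducible modules over the unital associative
`ℂ`-algebras `A₁`, `A₂`, and either every `A₁`-endomorphism of `U₁` is a scalar or `A₁`
has countable dimension over `ℂ`, then `U₁ ⊗ U₂` is an irreducible `A₁ ⊗ A₂`-module. -/
theorem statement10
    (A₁ A₂ : Type) [Ring A₁] [Algebra ℂ A₁] [Ring A₂] [Algebra ℂ A₂]
    (U₁ U₂ : Type) [AddCommGroup U₁] [Module ℂ U₁] [AddCommGroup U₂] [Module ℂ U₂]
    (ρ₁ : A₁ →ₐ[ℂ] Module.End ℂ U₁) (ρ₂ : A₂ →ₐ[ℂ] Module.End ℂ U₂)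
    (h₁ : AIrred A₁ U₁ ρ₁) (h₂ : AIrred A₂ U₂ ρ₂)
    (hyp : (∀ f : Module.End ℂ U₁, (∀ a : A₁, f * ρ₁ a = ρ₁ a * f) →
        ∃ c : ℂ, f = c • (1 : Module.End ℂ U₁)) ∨ CountableDim A₁)
    (ρT : A₁ ⊗[ℂ] A₂ →ₐ[ℂ] Module.End ℂ (U₁ ⊗[ℂ] U₂))
    (hρT : ∀ (a₁ : A₁) (a₂ : A₂),
      ρT (a₁ ⊗ₜ[ℂ] a₂) = TensorProduct.map (ρ₁ a₁) (ρ₂ a₂)) :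
    AIrred (A₁ ⊗[ℂ] A₂) (U₁ ⊗[ℂ] U₂) ρT := by
  have hs : ∀ f : Module.End ℂ U₁, (∀ a : A₁, f * ρ₁ a = ρ₁ a * f) →
      ∃ c : ℂ, f = c • (1 : Module.End ℂ U₁) := by
    rcases hyp with hsc | hcd
    · exact hsc
    · exact dixmier ρ₁ h₁ hcd
  haveI hnt₁ := h₁.1
  haveI hnt₂ := h₂.1
  constructor
  · -- Nontrivial (U₁ ⊗ U₂)
    rw [← rank_pos_iff_nontrivial (R := ℂ), rank_tensorProduct', pos_iff_ne_zero]
    intro hzero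
    rcases mul_eq_zero.mp hzero with hz | hz
    · exact (pos_iff_ne_zero.mp (rank_pos_iff_nontrivial.mpr hnt₁)) hz
    · exact (pos_iff_ne_zero.mp (rank_pos_iff_nontrivial.mpr hnt₂)) hz
  · intro S hSinv
    by_cases hbot : S = ⊥
    · exact Or.inl hbot
    refine Or.inr ?_
    obtain ⟨w, hwS, hw0⟩ := (Submodule.ne_bot_iff S).mp hbot
    obtain ⟨t, htw⟩ := TensorProduct.exists_finset w
    set e := t.equivFin
    have hw : w = ∑ i : Fin t.card,
        ((e.symm i : U₁ × U₂).1 ⊗ₜ[ℂ] (e.symm i : U₁ × U₂).2) := by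
      rw [htw, ← Finset.sum_coe_sort t (fun p => p.1 ⊗ₜ[ℂ] p.2)]
      exact (Equiv.sum_comp e.symm fun p => (p : U₁ × U₂).1 ⊗ₜ[ℂ] (p : U₁ × U₂).2).symm
    obtain ⟨p, q, hp, hq, hpq⟩ := exists_pure ρ₁ ρ₂ h₁ hs ρT hρT S hSinv t.card
      (fun i => (e.symm i : U₁ × U₂).1) (fun i => (e.symm i : U₁ × U₂).2)
      (hw ▸ hwS) (hw ▸ hw0)
    -- every z ⊗ q is in S
    have hall₁ : ∀ z : U₁, z ⊗ₜ[ℂ] q ∈ S := by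
      set T₁ : Submodule ℂ U₁ := S.comap ((TensorProduct.mk ℂ U₁ U₂).flip q) with hT₁
      have hinv : ∀ a : A₁, ∀ z ∈ T₁, ρ₁ a z ∈ T₁ := by
        intro a z hz
        rw [Submodule.mem_comap] at hz ⊢
        simp only [LinearMap.flip_apply, TensorProduct.mk_apply] at hz ⊢
        have h3 := hSinv (a ⊗ₜ[ℂ] 1) _ hz
        rwa [hρT, TensorProduct.map_tmul, map_one, Module.End.one_apply] at h3
      have hmem : p ∈ T₁ := by
        rw [Submodule.mem_comap]
        simpa only [LinearMap.flip_apply, TensorProduct.mk_apply] using hpq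
      have htop := invariant_eq_top ρ₁ h₁ T₁ hinv hmem hp
      intro z
      have hz : z ∈ T₁ := htop ▸ Submodule.mem_top
      rw [Submodule.mem_comap] at hz
      simpa only [LinearMap.flip_apply, TensorProduct.mk_apply] using hz
    have hall₂ : ∀ (z : U₁) (y : U₂), z ⊗ₜ[ℂ] y ∈ S := by
      intro z
      set T₂ : Submodule ℂ U₂ := S.comap (TensorProduct.mk ℂ U₁ U₂ z) with hT₂
      have hinv : ∀ a : A₂, ∀ y ∈ T₂, ρ₂ a y ∈ T₂ := by
        intro a y hy
        rw [Submodule.mem_comap] at hy ⊢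
        simp only [TensorProduct.mk_apply] at hy ⊢
        have h3 := hSinv ((1 : A₁) ⊗ₜ[ℂ] a) _ hy
        rwa [hρT, TensorProduct.map_tmul, map_one, Module.End.one_apply] at h3
      have hmem : q ∈ T₂ := by
        rw [Submodule.mem_comap]
        simpa only [TensorProduct.mk_apply] using hall₁ z
      have htop := invariant_eq_top ρ₂ h₂ T₂ hinv hmem hq
      intro y
      have hy : y ∈ T₂ := htop ▸ Submodule.mem_top
      rw [Submodule.mem_comap] at hy
      simpa only [TensorProduct.mk_apply] using hy
    rw [eq_top_iff, ← TensorProduct.span_tmul_eq_top ℂ U₁ U₂, Submodule.span_le]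
    rintro _ ⟨m, nn, rfl⟩
    exact hall₂ m nn


end Twisted
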